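/- Let (e_n) be a normalised Schauder basis of a Banach space X such that every normalised block sequence (x_n) is equivalent to its shift (x_{n+1}). Then (e_n) is unconditional. -/

import Mathlib

open Filter Topology

noncomputable section

structure SchauderBasis' (X : Type*) [NormedAddCommGroup X] [NormedSpace ℝ X] where
  e : ℕ → X
  coord : ℕ → X →L[ℝ] ℝ
  biorth : ∀ n m, coord n (e m) = if n = m then 1 else 0
  expansion : ∀ x : X,
    Filter.Tendsto (fun N => ∑ n ∈ Finset.range N, coord n x • e n) Filter.atTop (nhds x)
  normalised : ∀ n, ‖e n‖ = 1

section Defs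

variable {X Y : Type*} [NormedAddCommGroup X] [NormedSpace ℝ X]
  [NormedAddCommGroup Y] [NormedSpace ℝ Y]

/-- Convergence of the series `∑ x n` (of partial sums). -/
def Converges (x : ℕ → X) : Prop :=
  ∃ s, Filter.Tendsto (fun N => ∑ n ∈ Finset.range N, x n) Filter.atTop (nhds s)

/-- Two sequences are equivalent if the same scalar series converge. -/
def SeqEquiv (x : ℕ → X) (y : ℕ → Y) : Prop :=
  ∀ a : ℕ → ℝ, Converges (fun n => a n • x n) ↔ Converges (fun n => a n • y n)

/-- `C`-equivalence of two sequences. -/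
def CEquiv (C : ℝ) (x : ℕ → X) (y : ℕ → Y) : Prop :=
  ∀ (a : ℕ → ℝ) (N : ℕ),
    C⁻¹ * ‖∑ n ∈ Finset.range N, a n • y n‖ ≤ ‖∑ n ∈ Finset.range N, a n • x n‖ ∧
    ‖∑ n ∈ Finset.range N, a n • x n‖ ≤ C * ‖∑ n ∈ Finset.range N, a n • y n‖

/-- A basic sequence: uniformly bounded partial-sum projections. -/
def IsBasicSeq (x : ℕ → X) : Prop :=
  ∃ K, 1 ≤ K ∧ ∀ (a : ℕ → ℝ) (m n : ℕ), m ≤ n →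
    ‖∑ i ∈ Finset.range m, a i • x i‖ ≤ K * ‖∑ i ∈ Finset.range n, a i • x i‖

/-- A sequence of signs. -/
def IsSigns (θ : ℕ → ℝ) : Prop := ∀ n, θ n = 1 ∨ θ n = -1

end Defs

namespace SchauderBasis'

variable {X : Type*} [NormedAddCommGroup X] [NormedSpace ℝ X] (b : SchauderBasis' X)

/-- Support of a vector with respect to the basis. -/
def supp (x : X) : Set ℕ := {n | b.coord n x ≠ 0}

/-- A normalised block sequence of the basis. -/
def IsBlockSeq (x : ℕ → X) : Prop :=
  (∀ n, ‖x n‖ = 1) ∧ (∀ n, (b.supp (x n)).Finite) ∧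
  ∀ n, ∀ i ∈ b.supp (x n), ∀ j ∈ b.supp (x (n+1)), i < j

/-- Unconditionality of the basis. -/
def Unconditional : Prop :=
  ∀ θ : ℕ → ℝ, IsSigns θ → SeqEquiv (fun n => θ n • b.e n) b.e

/-- 1-unconditionality (finite-sum form). -/
def OneUnconditional : Prop :=
  ∀ (θ a : ℕ → ℝ), IsSigns θ → ∀ N,
    ‖∑ n ∈ Finset.range N, (θ n * a n) • b.e n‖ ≤ ‖∑ n ∈ Finset.range N, a n • b.e n‖

/-- The shift property: every normalised block sequence is equivalent to its shift. -/
def ShiftProperty : Prop :=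
  ∀ x : ℕ → X, b.IsBlockSeq x → SeqEquiv x (fun n => x (n+1))

/-- The basis is shrinking. -/
def Shrinking : Prop :=
  ∀ f : X →L[ℝ] ℝ, Filter.Tendsto
    (fun n => sSup ((fun y => |f y|) ''
      {y | y ∈ Submodule.span ℝ (Set.range fun i => b.e (n + i)) ∧ ‖y‖ ≤ 1}))
    Filter.atTop (nhds 0)

/-- The basis is boundedly complete. -/
def BoundedlyComplete : Prop :=
  ∀ a : ℕ → ℝ, (∃ M, ∀ N, ‖∑ i ∈ Finset.range N, a i • b.e i‖ ≤ M) →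
    Converges (fun i => a i • b.e i)

end SchauderBasis'

section Aux

variable {X : Type*} [NormedAddCommGroup X] [NormedSpace ℝ X]

lemma converges_congr {f g : ℕ → X} (h : f = g) : Converges f ↔ Converges g := by rw [h]

lemma signs_smul_isBlockSeq (b : SchauderBasis' X) (ε : ℕ → ℝ) (hε : IsSigns ε) :
    b.IsBlockSeq (fun n => ε n • b.e n) := by
  have hsupp : ∀ n, b.supp ((fun n => ε n • b.e n) n) ⊆ {n} := by
    intro n m hm
    simp only [SchauderBasis'.supp, Set.mem_setOf_eq, map_smul, smul_eq_mul] at hm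
    rw [b.biorth m n] at hm
    rw [Set.mem_singleton_iff]
    by_contra h
    rw [if_neg h] at hm
    simp at hm
  refine ⟨?_, ?_, ?_⟩
  · intro n
    rcases hε n with h | h <;> simp [h, norm_smul, b.normalised n]
  · intro n
    exact (Set.finite_singleton n).subset (hsupp n)
  · intro n i hi j hj
    have hi' := hsupp n hi
    have hj' := hsupp (n+1) hj
    simp only [Set.mem_singleton_iff] at hi' hj'
    omega

lemma basis_isBlockSeq (b : SchauderBasis' X) : b.IsBlockSeq b.e := by
  have h : b.e = fun n => (1 : ℝ) • b.e n := by funext n; rw [one_smul]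
  rw [h]
  exact signs_smul_isBlockSeq b (fun _ => 1) (fun _ => Or.inl rfl)

end Aux

theorem shift_property_imp_unconditional
    {X : Type*} [NormedAddCommGroup X] [NormedSpace ℝ X] [CompleteSpace X]
    (b : SchauderBasis' X) (hshift : b.ShiftProperty) :
    b.Unconditional := by
  intro θ hθ a
  -- the cumulative sign sequence
  set ε : ℕ → ℝ := fun j => ∏ i ∈ Finset.range j, θ i with hεdef
  have hεsigns : IsSigns ε := by
    intro n
    induction n with
    | zero => left; simp [hεdef]
    | succ n ih =>
      have hs : ε (n+1) = ε n * θ n := Finset.prod_range_succ _ _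
      rcases ih with h | h <;> rcases hθ n with h' | h' <;>
        rw [hs, h, h'] <;> norm_num
  have hεsucc : ∀ j, ε (j+1) = ε j * θ j := fun j => Finset.prod_range_succ _ _
  have h1 := hshift b.e (basis_isBlockSeq b) a
  have h2 := hshift (fun n => ε n • b.e n) (signs_smul_isBlockSeq b ε hεsigns)
      (fun j => ε (j+1) * a j)
  have key1 : (fun n => a n • θ n • b.e n)
      = (fun j => (ε (j+1) * a j) • (ε j • b.e j)) := by
    funext j
    rw [smul_smul, smul_smul, hεsucc]
    rcases hεsigns j with h | h <;> rw [h] <;> congr 1 <;> ring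
  have key2 : (fun j => (ε (j+1) * a j) • (ε (j+1) • b.e (j+1)))
      = (fun j => a j • b.e (j+1)) := by
    funext j
    rw [smul_smul]
    rcases hεsigns (j+1) with h | h <;> rw [h] <;> congr 1 <;> ring
  calc Converges (fun n => a n • θ n • b.e n)
      ↔ Converges (fun j => (ε (j+1) * a j) • (ε j • b.e j)) := converges_congr key1
    _ ↔ Converges (fun j => (ε (j+1) * a j) • (ε (j+1) • b.e (j+1))) := h2
    _ ↔ Converges (fun j => a j • b.e (j+1)) := converges_congr key2
    _ ↔ Converges (fun n => a n • b.e n) := h1.symm
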